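/- If r ≥ 4, n ≥ r+1, and n - r is even, then σ(K_{r+1} - U, n) ≥ (r-1)(2n-r) - 3(n-r), where U is a graph on k vertices (7 ≤ k ≤ r+1) containing no 4-cycle and no Z_4 = K_4 - P_2. -/

import Mathlib

open SimpleGraph Finset

noncomputable def deg {n : ℕ} (G : SimpleGraph (Fin n)) (v : Fin n) : ℕ :=
  Set.ncard {w | G.Adj v w}

def Contains {α β : Type*} (G : SimpleGraph α) (H : SimpleGraph β) : Prop :=
  ∃ f : β ↪ α, ∀ ⦃u v : β⦄, H.Adj u v → G.Adj (f u) (f v)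

def IsGraphic {n : ℕ} (d : Fin n → ℕ) : Prop :=
  ∃ G : SimpleGraph (Fin n), ∀ i, deg G i = d i

def PotentiallyGraphic {n : ℕ} {β : Type*} (H : SimpleGraph β) (d : Fin n → ℕ) : Prop :=
  ∃ G : SimpleGraph (Fin n), (∀ i, deg G i = d i) ∧ Contains G H

noncomputable def sigmaPot {β : Type*} (H : SimpleGraph β) (n : ℕ) : ℕ :=
  sInf {l : ℕ | Even l ∧ ∀ d : Fin n → ℕ, Antitone d → IsGraphic d →
    l ≤ ∑ i, d i → PotentiallyGraphic H d}

def C4graph : SimpleGraph (Fin 4) :=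
  SimpleGraph.fromEdgeSet {s(0,1), s(1,2), s(2,3), s(0,3)}

def Z4graph : SimpleGraph (Fin 4) :=
  SimpleGraph.fromEdgeSet {s(0,2), s(0,3), s(1,3), s(2,3)}

def K3UP3 : SimpleGraph (Fin 7) :=
  SimpleGraph.fromEdgeSet {s(0,1), s(0,2), s(1,2), s(3,4), s(4,5), s(5,6)}

-- ===== auxiliary lemmas =====

lemma card_val_lt (n m : ℕ) (h : m ≤ n) :
    ((univ : Finset (Fin n)).filter (fun w : Fin n => w.val < m)).card = m := by
  have : ((univ : Finset (Fin n)).filter (fun w : Fin n => w.val < m)).card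
      = (univ : Finset (Fin m)).card := by
    apply Finset.card_bij (fun (a : Fin n) ha => (⟨a.val, (Finset.mem_filter.mp ha).2⟩ : Fin m))
    · intro a ha; exact Finset.mem_univ _
    · intro a ha b hb hab
      exact Fin.ext (congrArg Fin.val hab :)
    · intro b _
      exact ⟨⟨b.val, lt_of_lt_of_le b.isLt h⟩, Finset.mem_filter.mpr ⟨Finset.mem_univ _, b.isLt⟩, rfl⟩
  simp [this]

lemma card_lt_or_eq (n m c : ℕ) (hmc : m ≤ c) (hcn : c < n) :
    ((univ : Finset (Fin n)).filter (fun w : Fin n => w.val < m ∨ w.val = c)).card = m + 1 := by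
  rw [Finset.filter_or, Finset.card_union_of_disjoint, card_val_lt n m (by omega)]
  · congr 1
    have : (univ : Finset (Fin n)).filter (fun w : Fin n => w.val = c) = {⟨c, hcn⟩} := by
      ext w
      simp [Fin.ext_iff]
    rw [this, Finset.card_singleton]
  · rw [Finset.disjoint_left]
    intro w hw hw'
    rw [Finset.mem_filter] at hw hw'
    omega

lemma card_lt_or_eq2 (n m c₁ c₂ : ℕ) (hmc : m ≤ c₁) (hc : c₁ < c₂) (hcn : c₂ < n) :
    ((univ : Finset (Fin n)).filter
      (fun w : Fin n => w.val < m ∨ w.val = c₁ ∨ w.val = c₂)).card = m + 2 := by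
  have : ∀ w : Fin n, (w.val < m ∨ w.val = c₁ ∨ w.val = c₂) ↔ ((w.val < m ∨ w.val = c₁) ∨ w.val = c₂) := by
    intro w; tauto
  rw [Finset.filter_congr (fun w _ => this w), Finset.filter_or,
    Finset.card_union_of_disjoint, Finset.filter_or, Finset.card_union_of_disjoint,
    card_val_lt n m (by omega)]
  · have h1 : (univ : Finset (Fin n)).filter (fun w : Fin n => w.val = c₁) = {⟨c₁, by omega⟩} := by
      ext w; simp [Fin.ext_iff]
    have h2 : (univ : Finset (Fin n)).filter (fun w : Fin n => w.val = c₂) = {⟨c₂, hcn⟩} := by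
      ext w; simp [Fin.ext_iff]
    rw [h1, h2]
    simp
  · rw [Finset.disjoint_left]
    intro w hw hw'
    rw [Finset.mem_filter] at hw hw'
    omega
  · rw [Finset.disjoint_left]
    intro w hw hw'
    rw [Finset.mem_filter] at hw hw'
    simp at hw
    omega

open Classical in
lemma deg_eq {n : ℕ} (G : SimpleGraph (Fin n)) (v : Fin n) :
    deg G v = ((univ : Finset (Fin n)).filter (fun w => G.Adj v w)).card := by
  rw [deg, Set.ncard_eq_toFinset_card', Set.toFinset_setOf]

open Classical in
lemma deg_le {n : ℕ} (G : SimpleGraph (Fin n)) (v : Fin n) : deg G v ≤ n := by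
  rw [deg_eq]
  calc ((univ : Finset (Fin n)).filter (fun w => G.Adj v w)).card ≤ (univ : Finset (Fin n)).card :=
        Finset.card_filter_le _ _
    _ = n := by simp

open Classical in
lemma adj_of_deg {n : ℕ} (G : SimpleGraph (Fin n)) (v : Fin n) (h : deg G v = n - 1)
    (w : Fin n) (hw : w ≠ v) : G.Adj v w := by
  rw [deg_eq] at h
  have hsub : (univ : Finset (Fin n)).filter (fun w => G.Adj v w) ⊆ univ.erase v := by
    intro x hx
    rw [Finset.mem_filter] at hx
    exact Finset.mem_erase.mpr ⟨(G.adj_comm v x).mp hx.2 |>.ne, Finset.mem_univ _⟩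
  have hcard : (univ.erase v).card = n - 1 := by
    rw [Finset.card_erase_of_mem (Finset.mem_univ _)]; simp
  have := Finset.eq_of_subset_of_card_le hsub (by rw [h, hcard])
  have hw' : w ∈ univ.erase v := Finset.mem_erase.mpr ⟨hw, Finset.mem_univ _⟩
  rw [← this, Finset.mem_filter] at hw'
  exact hw'.2

lemma c4_adj (i j : Fin 4) : C4graph.Adj i j ↔
    (s(i,j) = s(0,1) ∨ s(i,j) = s(1,2) ∨ s(i,j) = s(2,3) ∨ s(i,j) = s((0:Fin 4),(3:Fin 4))) ∧ i ≠ j := by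
  simp [C4graph]

lemma z4_adj (i j : Fin 4) : Z4graph.Adj i j ↔
    (s(i,j) = s(0,2) ∨ s(i,j) = s(0,3) ∨ s(i,j) = s(1,3) ∨ s(i,j) = s((2:Fin 4),(3:Fin 4))) ∧ i ≠ j := by
  simp [Z4graph]

lemma mk_embed {α : Type*} (a b c d : α) (hab : a ≠ b) (hac : a ≠ c) (had : a ≠ d)
    (hbc : b ≠ c) (hbd : b ≠ d) (hcd : c ≠ d) : Function.Injective ![a,b,c,d] := by
  intro i j hij
  fin_cases i <;> fin_cases j <;> simp_all

lemma containsC4 {α : Type*} (V : SimpleGraph α) (a b c d : α) (hab : a ≠ b) (hac : a ≠ c)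
    (had : a ≠ d) (hbc : b ≠ c) (hbd : b ≠ d) (hcd : c ≠ d)
    (h1 : V.Adj a b) (h2 : V.Adj b c) (h3 : V.Adj c d) (h4 : V.Adj a d) :
    Contains V C4graph := by
  refine ⟨⟨![a,b,c,d], mk_embed a b c d hab hac had hbc hbd hcd⟩, ?_⟩
  intro i j hadj
  rw [c4_adj] at hadj
  fin_cases i <;> fin_cases j <;>
    simp only [Sym2.eq, Sym2.rel_iff', Prod.mk.injEq, Prod.swap_prod_mk] at hadj <;>
    simp_all [Function.Embedding.coeFn_mk, V.adj_comm]

lemma containsZ4 {α : Type*} (V : SimpleGraph α) (a b c d : α) (hab : a ≠ b) (hac : a ≠ c)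
    (had : a ≠ d) (hbc : b ≠ c) (hbd : b ≠ d) (hcd : c ≠ d)
    (h1 : V.Adj a c) (h2 : V.Adj a d) (h3 : V.Adj b d) (h4 : V.Adj c d) :
    Contains V Z4graph := by
  refine ⟨⟨![a,b,c,d], mk_embed a b c d hab hac had hbc hbd hcd⟩, ?_⟩
  intro i j hadj
  rw [z4_adj] at hadj
  fin_cases i <;> fin_cases j <;>
    simp only [Sym2.eq, Sym2.rel_iff', Prod.mk.injEq, Prod.swap_prod_mk] at hadj <;>
    simp_all [Function.Embedding.coeFn_mk, V.adj_comm]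

lemma contains_of_map {k N : ℕ} (f : Fin k ↪ Fin N) (U : SimpleGraph (Fin k))
    (X : SimpleGraph (Fin 4)) (hiso : ∀ i : Fin 4, ∃ j, X.Adj i j)
    (h : Contains (U.map f) X) : Contains U X := by
  obtain ⟨e, he⟩ := h
  have hrange : ∀ i : Fin 4, ∃ a : Fin k, f a = e i := by
    intro i
    obtain ⟨j, hj⟩ := hiso i
    obtain ⟨a, b, -, ha, -⟩ := (SimpleGraph.map_adj f U _ _).mp (he hj)
    exact ⟨a, ha⟩
  choose p hp using hrange
  have hpinj : Function.Injective p := by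
    intro i j hij
    apply e.injective
    rw [← hp i, ← hp j, hij]
  refine ⟨⟨p, hpinj⟩, ?_⟩
  intro i j hadj
  obtain ⟨a, b, hU, ha, hb⟩ := (SimpleGraph.map_adj f U _ _).mp (he hadj)
  have : a = p i := f.injective (by rw [ha, hp])
  have hb' : b = p j := f.injective (by rw [hb, hp])
  simpa [← this, ← hb'] using hU

lemma c4_no_iso : ∀ i : Fin 4, ∃ j, C4graph.Adj i j := by
  intro i
  fin_cases i
  · exact ⟨1, by rw [c4_adj]; simp⟩
  · exact ⟨0, by rw [c4_adj]; decide⟩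
  · exact ⟨1, by rw [c4_adj]; decide⟩
  · exact ⟨0, by rw [c4_adj]; decide⟩

lemma z4_no_iso : ∀ i : Fin 4, ∃ j, Z4graph.Adj i j := by
  intro i
  fin_cases i
  · exact ⟨2, by rw [z4_adj]; decide⟩
  · exact ⟨3, by rw [z4_adj]; decide⟩
  · exact ⟨0, by rw [z4_adj]; decide⟩
  · exact ⟨0, by rw [z4_adj]; decide⟩

lemma key_lemma {N : ℕ} (V : SimpleGraph (Fin N)) [DecidableRel V.Adj] (hC4 : ¬ Contains V C4graph)
    (hZ4 : ¬ Contains V Z4graph) (A : Finset (Fin N)) (hA : 4 ≤ A.card) (s : Fin N)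
    (h : ∀ a ∈ A, ((A.erase a).filter (fun b => ¬ V.Adj a b)).card ≤ if a = s then 2 else 1) :
    False := by
  by_cases hpair : ∃ a ∈ A, ∃ b ∈ A, a ≠ b ∧ a ≠ s ∧ b ≠ s ∧ ¬ V.Adj a b
  · obtain ⟨a, ha, b, hb, hne, has, hbs, hnadj⟩ := hpair
    have key1 : ∀ c ∈ A, c ≠ a → c ≠ b → V.Adj a c := by
      intro c hc hca hcb
      by_contra hac
      have h1 := h a ha
      rw [if_neg has] at h1
      have hbmem : b ∈ (A.erase a).filter (fun x => ¬ V.Adj a x) :=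
        Finset.mem_filter.mpr ⟨Finset.mem_erase.mpr ⟨hne.symm, hb⟩, hnadj⟩
      have hcmem : c ∈ (A.erase a).filter (fun x => ¬ V.Adj a x) :=
        Finset.mem_filter.mpr ⟨Finset.mem_erase.mpr ⟨hca, hc⟩, hac⟩
      have := Finset.one_lt_card.mpr ⟨b, hbmem, c, hcmem, fun hh => hcb hh.symm⟩
      omega
    have key2 : ∀ c ∈ A, c ≠ a → c ≠ b → V.Adj b c := by
      intro c hc hca hcb
      by_contra hac
      have h1 := h b hb
      rw [if_neg hbs] at h1
      have hamem : a ∈ (A.erase b).filter (fun x => ¬ V.Adj b x) :=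
        Finset.mem_filter.mpr ⟨Finset.mem_erase.mpr ⟨hne, ha⟩, fun hh => hnadj hh.symm⟩
      have hcmem : c ∈ (A.erase b).filter (fun x => ¬ V.Adj b x) :=
        Finset.mem_filter.mpr ⟨Finset.mem_erase.mpr ⟨hcb, hc⟩, hac⟩
      have := Finset.one_lt_card.mpr ⟨a, hamem, c, hcmem, fun hh => hca hh.symm⟩
      omega
    have hcard2 : 1 < ((A.erase a).erase b).card := by
      rw [Finset.card_erase_of_mem (Finset.mem_erase.mpr ⟨hne.symm, hb⟩),
        Finset.card_erase_of_mem ha]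
      omega
    obtain ⟨x, hx, y, hy, hxy⟩ := Finset.one_lt_card.mp hcard2
    obtain ⟨hxb, hxa, hxA⟩ : x ≠ b ∧ x ≠ a ∧ x ∈ A := by
      obtain ⟨h1, h2⟩ := Finset.mem_erase.mp hx
      obtain ⟨h3, h4⟩ := Finset.mem_erase.mp h2
      exact ⟨h1, h3, h4⟩
    obtain ⟨hyb, hya, hyA⟩ : y ≠ b ∧ y ≠ a ∧ y ∈ A := by
      obtain ⟨h1, h2⟩ := Finset.mem_erase.mp hy
      obtain ⟨h3, h4⟩ := Finset.mem_erase.mp h2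
      exact ⟨h1, h3, h4⟩
    exact hC4 (containsC4 V a x b y hxa.symm hne hya.symm hxb hxy (fun hh => hyb hh.symm)
      (key1 x hxA hxa hxb) ((key2 x hxA hxa hxb).symm) ((key2 y hyA hya hyb))
      ((key1 y hyA hya hyb).symm.symm))
  · push_neg at hpair
    set B := A.erase s with hBdef
    have hB3 : 3 ≤ B.card := by
      by_cases hsA : s ∈ A
      · rw [hBdef, Finset.card_erase_of_mem hsA]; omega
      · rw [hBdef, Finset.erase_eq_of_notMem hsA]; omega
    have hadjB : ∀ x ∈ B, ∀ y ∈ B, x ≠ y → V.Adj x y := by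
      intro x hx y hy hxy
      obtain ⟨hxs, hxA⟩ := Finset.mem_erase.mp hx
      obtain ⟨hys, hyA⟩ := Finset.mem_erase.mp hy
      exact hpair x hxA y hyA hxy hxs hys
    by_cases h4 : 4 ≤ B.card
    · obtain ⟨a, haB⟩ := Finset.card_pos.mp (show 0 < B.card by omega)
      have h3' : 0 < (B.erase a).card := by rw [Finset.card_erase_of_mem haB]; omega
      obtain ⟨b, hbB'⟩ := Finset.card_pos.mp h3'
      have h2' : 0 < ((B.erase a).erase b).card := by
        rw [Finset.card_erase_of_mem hbB', Finset.card_erase_of_mem haB]; omega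
      obtain ⟨c, hcB'⟩ := Finset.card_pos.mp h2'
      have h1' : 0 < (((B.erase a).erase b).erase c).card := by
        rw [Finset.card_erase_of_mem hcB', Finset.card_erase_of_mem hbB',
          Finset.card_erase_of_mem haB]; omega
      obtain ⟨d, hdB'⟩ := Finset.card_pos.mp h1'
      obtain ⟨hba, hbB⟩ := Finset.mem_erase.mp hbB'
      obtain ⟨hcb, hc2⟩ := Finset.mem_erase.mp hcB'
      obtain ⟨hca, hcB⟩ := Finset.mem_erase.mp hc2
      obtain ⟨hdc, hd2⟩ := Finset.mem_erase.mp hdB'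
      obtain ⟨hdb, hd3⟩ := Finset.mem_erase.mp hd2
      obtain ⟨hda, hdB⟩ := Finset.mem_erase.mp hd3
      exact hZ4 (containsZ4 V a b c d hba.symm hca.symm hda.symm hcb.symm hdb.symm hdc.symm
        (hadjB a haB c hcB (Ne.symm hca)) (hadjB a haB d hdB (Ne.symm hda))
        (hadjB b hbB d hdB (Ne.symm hdb)) (hadjB c hcB d hdB (Ne.symm hdc)))
    · have hsA : s ∈ A := by
        by_contra hs
        rw [hBdef, Finset.erase_eq_of_notMem hs] at h4
        omega
      have hcard : (B.filter (fun b => ¬ V.Adj s b)).card ≤ 2 := by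
        have := h s hsA
        rwa [if_pos rfl] at this
      have hex : ∃ t ∈ B, V.Adj s t := by
        by_contra hno
        push_neg at hno
        have : B.filter (fun b => ¬ V.Adj s b) = B :=
          Finset.filter_eq_self.mpr (fun x hx => hno x hx)
        rw [this] at hcard
        omega
      obtain ⟨t, htB, hst⟩ := hex
      have h2' : 1 < (B.erase t).card := by rw [Finset.card_erase_of_mem htB]; omega
      obtain ⟨u, hu', w, hw', huw⟩ := Finset.one_lt_card.mp h2'
      obtain ⟨hut, huB⟩ := Finset.mem_erase.mp hu'
      obtain ⟨hwt, hwB⟩ := Finset.mem_erase.mp hw'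
      have hus : u ≠ s := (Finset.mem_erase.mp huB).1
      have hws : w ≠ s := (Finset.mem_erase.mp hwB).1
      exact hZ4 (containsZ4 V u s w t hus huw hut hws.symm (Ne.symm hst.ne') hwt
        (hadjB u huB w hwB huw) (hadjB u huB t htB hut) hst (hadjB w hwB t htB hwt))

lemma sum_step (x y z a : ℕ) : ∀ n, a < n →
    ∑ j ∈ range n, (if j < a then x else if j = a then y else z) = a * x + y + (n - a - 1) * z := by
  intro n
  induction n with
  | zero => omega
  | succ m ih =>
    intro hm
    rw [Finset.sum_range_succ]
    rcases Nat.lt_or_ge a m with hlt | hge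
    · rw [ih hlt, if_neg (by omega), if_neg (by omega)]
      have h1 : m + 1 - a - 1 = (m - a - 1) + 1 := by omega
      rw [h1]; ring
    · have ham : a = m := by omega
      subst ham
      rw [if_neg (by omega), if_pos rfl]
      have : ∀ j ∈ range a, (if j < a then x else if j = a then y else z) = x := by
        intro j hj; rw [if_pos (Finset.mem_range.mp hj)]
      rw [Finset.sum_congr rfl this, Finset.sum_const, Finset.card_range]
      have : a + 1 - a - 1 = 0 := by omega
      rw [this]; ring

def dseq (r n : ℕ) : Fin n → ℕ := fun i =>
  if i.val < r - 3 then n - 1 else if i.val = r - 3 then r - 1 else r - 2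

def G0 (r n : ℕ) : SimpleGraph (Fin n) :=
  SimpleGraph.fromRel (fun u v =>
    u.val < r - 3 ∨ (u.val = r - 3 ∧ (v.val = r - 2 ∨ v.val = r - 1)) ∨
    (r ≤ u.val ∧ v.val = u.val + 1 ∧ (u.val - r) % 2 = 0))
open Classical in
lemma G0_deg (r n : ℕ) (hr : 4 ≤ r) (hn : r + 2 ≤ n) (hpar : Even (n - r)) (v : Fin n) :
    deg (G0 r n) v = dseq r n v := by
  obtain ⟨c, hc⟩ := hpar
  rw [deg_eq]
  rcases Nat.lt_or_ge v.val (r - 3) with hv | hv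
  · -- small vertex
    have hiff : ∀ w : Fin n, (G0 r n).Adj v w ↔ ¬ (w = v) := by
      intro w
      simp only [G0, SimpleGraph.fromRel_adj, ne_eq, Fin.ext_iff]
      constructor
      · intro ⟨h1, _⟩ h2; exact h1 (by omega)
      · intro h; exact ⟨fun h2 => h (by omega), Or.inl (Or.inl hv)⟩
    rw [Finset.filter_congr (fun w _ => hiff w), Finset.filter_ne', Finset.card_erase_of_mem
      (Finset.mem_univ v), Finset.card_univ, Fintype.card_fin]
    simp only [dseq, if_pos hv]
  · rcases Nat.lt_or_ge v.val r with hvr | hvr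
    · rcases Nat.lt_or_ge v.val (r - 2) with hv2 | hv2
      · -- v.val = r - 3
        have hv3 : v.val = r - 3 := by omega
        have hiff : ∀ w : Fin n, (G0 r n).Adj v w ↔
            (w.val < r - 3 ∨ w.val = r - 2 ∨ w.val = r - 1) := by
          intro w
          simp only [G0, SimpleGraph.fromRel_adj, ne_eq, Fin.ext_iff]
          constructor
          · intro ⟨h1, h2⟩
            rcases h2 with (h | ⟨_, h⟩ | ⟨h, _⟩) | (h | ⟨h, h'⟩ | ⟨h, h', _⟩) <;> omega
          · intro h
            refine ⟨by omega, ?_⟩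
            rcases h with h | h | h
            · exact Or.inr (Or.inl h)
            · exact Or.inl (Or.inr (Or.inl ⟨hv3, Or.inl h⟩))
            · exact Or.inl (Or.inr (Or.inl ⟨hv3, Or.inr h⟩))
        rw [Finset.filter_congr (fun w _ => hiff w),
          card_lt_or_eq2 n (r-3) (r-2) (r-1) (by omega) (by omega) (by omega)]
        simp only [dseq, hv3]
        rw [if_neg (by omega), if_true]
        omega
      · -- v.val = r - 2 or r - 1
        have hiff : ∀ w : Fin n, (G0 r n).Adj v w ↔ (w.val < r - 3 ∨ w.val = r - 3) := by
          intro w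
          simp only [G0, SimpleGraph.fromRel_adj, ne_eq, Fin.ext_iff]
          constructor
          · intro ⟨h1, h2⟩
            rcases h2 with (h | ⟨h, _⟩ | ⟨h, _⟩) | (h | ⟨h, h'⟩ | ⟨h, h', _⟩) <;> omega
          · intro h
            refine ⟨by omega, ?_⟩
            rcases h with h | h
            · exact Or.inr (Or.inl h)
            · exact Or.inr (Or.inr (Or.inl ⟨h, by omega⟩))
        rw [Finset.filter_congr (fun w _ => hiff w),
          card_lt_or_eq n (r-3) (r-3) (by omega) (by omega)]
        simp only [dseq]
        rw [if_neg (by omega), if_neg (by omega)]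
        omega
    · -- tail matched vertex
      rcases Nat.decEq ((v.val - r) % 2) 0 with hpar2 | hpar2
      case isFalse =>
        -- odd offset, partner v - 1
        have hvr1 : r + 1 ≤ v.val := by omega
        have hiff : ∀ w : Fin n, (G0 r n).Adj v w ↔ (w.val < r - 3 ∨ w.val = v.val - 1) := by
          intro w
          simp only [G0, SimpleGraph.fromRel_adj, ne_eq, Fin.ext_iff]
          constructor
          · intro ⟨h1, h2⟩
            rcases h2 with (h | ⟨h, _⟩ | ⟨h, h', h''⟩) | (h | ⟨h, h'⟩ | ⟨h, h', h''⟩) <;> omega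
          · intro h
            refine ⟨by omega, ?_⟩
            rcases h with h | h
            · exact Or.inr (Or.inl h)
            · exact Or.inr (Or.inr (Or.inr ⟨by omega, by omega, by omega⟩))
        rw [Finset.filter_congr (fun w _ => hiff w),
          card_lt_or_eq n (r-3) (v.val - 1) (by omega) (by omega)]
        simp only [dseq]
        rw [if_neg (by omega), if_neg (by omega)]
        omega
      case isTrue =>
        -- even offset, partner v + 1; v.val + 1 < n since n - r even
        have hvn : v.val + 1 < n := by
          have := v.isLt
          omega
        have hiff : ∀ w : Fin n, (G0 r n).Adj v w ↔ (w.val < r - 3 ∨ w.val = v.val + 1) := by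
          intro w
          simp only [G0, SimpleGraph.fromRel_adj, ne_eq, Fin.ext_iff]
          constructor
          · intro ⟨h1, h2⟩
            rcases h2 with (h | ⟨h, _⟩ | ⟨h, h', h''⟩) | (h | ⟨h, h'⟩ | ⟨h, h', h''⟩) <;> omega
          · intro h
            refine ⟨by omega, ?_⟩
            rcases h with h | h
            · exact Or.inr (Or.inl h)
            · exact Or.inl (Or.inr (Or.inr ⟨by omega, by omega, by omega⟩))
        rw [Finset.filter_congr (fun w _ => hiff w),
          card_lt_or_eq n (r-3) (v.val + 1) (by omega) (by omega)]
        simp only [dseq]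
        rw [if_neg (by omega), if_neg (by omega)]
        omega

open Classical in
lemma tail_count {r n : ℕ} (hr : 4 ≤ r) (hn : r + 2 ≤ n) (G : SimpleGraph (Fin n))
    (hdeg : ∀ i, deg G i = dseq r n i) (v : Fin n) (hv : r - 3 ≤ v.val) :
    ((univ : Finset (Fin n)).filter (fun w => G.Adj v w ∧ r - 3 ≤ w.val)).card + (r - 3)
      = dseq r n v := by
  have hsmall : ∀ w : Fin n, w.val < r - 3 → G.Adj v w := by
    intro w hw
    have hdw : deg G w = n - 1 := by
      rw [hdeg w]; simp only [dseq, if_pos hw]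
    exact ((adj_of_deg G w hdw v (by intro h; subst h; omega)).symm)
  have hsplit : (univ : Finset (Fin n)).filter (fun w => G.Adj v w)
      = (univ : Finset (Fin n)).filter (fun w => G.Adj v w ∧ r - 3 ≤ w.val)
        ∪ (univ : Finset (Fin n)).filter (fun w : Fin n => w.val < r - 3) := by
    ext w
    simp only [Finset.mem_filter, Finset.mem_union, Finset.mem_univ, true_and]
    constructor
    · intro h
      rcases Nat.lt_or_ge w.val (r-3) with h' | h'
      · exact Or.inr h'
      · exact Or.inl ⟨h, h'⟩
    · intro h
      rcases h with ⟨h, _⟩ | h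
      · exact h
      · exact hsmall w h
  have hdisj : Disjoint ((univ : Finset (Fin n)).filter (fun w => G.Adj v w ∧ r - 3 ≤ w.val))
      ((univ : Finset (Fin n)).filter (fun w : Fin n => w.val < r - 3)) := by
    rw [Finset.disjoint_left]
    intro w hw hw'
    rw [Finset.mem_filter] at hw hw'
    omega
  have := hdeg v
  rw [deg_eq, hsplit, Finset.card_union_of_disjoint hdisj, card_val_lt n (r-3) (by omega)] at this
  exact this

/-- Lower bound for `σ(K_{r+1} - U, n)` when `n - r` is even. -/
theorem stmt_3 (r n k : ℕ) (hr : 4 ≤ r) (hn : r + 1 ≤ n) (hpar : Even (n - r))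
    (hk7 : 7 ≤ k) (hkr : k ≤ r + 1) (U : SimpleGraph (Fin k))
    (hC4 : ¬ Contains U C4graph) (hZ4 : ¬ Contains U Z4graph)
    (f : Fin k ↪ Fin (r + 1)) :
    (r - 1) * (2 * n - r) - 3 * (n - r) ≤
      sigmaPot ((⊤ : SimpleGraph (Fin (r + 1))) \ U.map f) n := by
  classical
  obtain ⟨c, hc1, hc2⟩ : ∃ c, n = r + 2 * c ∧ 1 ≤ c := by
    obtain ⟨c, hc⟩ := hpar
    exact ⟨c, by omega, by omega⟩
  obtain ⟨q, rfl⟩ : ∃ q, r = q + 4 := ⟨r - 4, by omega⟩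
  have hn' : n = q + 4 + 2 * c := by omega
  subst hn'
  have hn2 : (q + 4) + 2 ≤ (q + 4 + 2 * c) := by omega
  -- the sum of the counterexample sequence
  have hsum : ∑ i, dseq (q + 4) (q + 4 + 2 * c) i = (q+1)*(q+3+2*c) + (q+3) + (2*c+2)*(q+2) := by
    have h1 : ∑ i, dseq (q + 4) (q + 4 + 2 * c) i
        = ∑ j ∈ range (q + 4 + 2 * c), (if j < (q + 4) - 3 then (q + 4 + 2 * c) - 1 else if j = (q + 4) - 3 then (q + 4) - 1 else (q + 4) - 2) := by
      simp only [dseq]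
      rw [Fin.sum_univ_eq_sum_range
        (fun j => if j < (q + 4) - 3 then (q + 4 + 2 * c) - 1 else if j = (q + 4) - 3 then (q + 4) - 1 else (q + 4) - 2) (q + 4 + 2 * c)]
    rw [h1, sum_step ((q + 4 + 2 * c)-1) ((q + 4)-1) ((q + 4)-2) ((q + 4)-3) (q + 4 + 2 * c) (by omega)]
    have e1 : (q + 4) - 3 = q + 1 := by omega
    have e2 : (q + 4 + 2 * c) - 1 = q + 3 + 2 * c := by omega
    have e3 : (q + 4) - 1 = q + 3 := by omega
    have e4 : (q + 4 + 2 * c) - ((q + 4) - 3) - 1 = 2 * c + 2 := by omega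
    have e5 : (q + 4) - 2 = q + 2 := by omega
    rw [e4, e1, e2, e3, e5]
  -- the bound equals the sum plus 2
  have hbound : ((q + 4) - 1) * (2 * (q + 4 + 2 * c) - (q + 4)) - 3 * ((q + 4 + 2 * c) - (q + 4))
      = ((q+1)*(q+3+2*c) + (q+3) + (2*c+2)*(q+2)) + 2 := by
    have e1 : (q + 4) - 1 = q + 3 := by omega
    have e2 : 2 * (q + 4 + 2 * c) - (q + 4) = q + 4 + 4 * c := by omega
    have e3 : (q + 4 + 2 * c) - (q + 4) = 2 * c := by omega
    rw [e1, e2, e3]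
    have : (q + 3) * (q + 4 + 4 * c)
        = ((q+1)*(q+3+2*c) + (q+3) + (2*c+2)*(q+2)) + 2 + 3 * (2 * c) := by ring
    omega
  have hseven : Even ((q+1)*(q+3+2*c) + (q+3) + (2*c+2)*(q+2)) := by
    rcases Nat.even_or_odd q with ⟨a, rfl⟩ | ⟨a, rfl⟩
    · exact ⟨2*a^2 + 7*a + 5 + 4*a*c + 3*c, by ring⟩
    · exact ⟨2*a^2 + 9*a + 9 + 4*a*c + 5*c, by ring⟩
  apply le_csInf
  · -- the defining set is nonempty
    refine ⟨(q + 4 + 2 * c) * (q + 4 + 2 * c) + (q + 4 + 2 * c) + 2, ?_, ?_⟩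
    · have : (q + 4 + 2 * c) * (q + 4 + 2 * c) + (q + 4 + 2 * c) + 2 = (q + 4 + 2 * c) * ((q + 4 + 2 * c) + 1) + 2 := by ring
      rw [this]
      exact (Nat.even_mul_succ_self (q + 4 + 2 * c)).add even_two
    · intro d _ hgraph hsumle
      exfalso
      obtain ⟨G, hG⟩ := hgraph
      have hle : ∑ i, d i ≤ (q + 4 + 2 * c) * (q + 4 + 2 * c) := by
        calc ∑ i, d i = ∑ i, deg G i := Finset.sum_congr rfl (fun i _ => (hG i).symm)
          _ ≤ ∑ _i : Fin (q + 4 + 2 * c), (q + 4 + 2 * c) := Finset.sum_le_sum (fun i _ => deg_le G i)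
          _ = (q + 4 + 2 * c) * (q + 4 + 2 * c) := by simp [mul_comm]
      omega
  · intro l hl
    obtain ⟨hleven, hprop⟩ := hl
    by_contra hlt
    push_neg at hlt
    -- l is small enough that the counterexample sequence has sum ≥ l
    have hlsum : l ≤ ∑ i, dseq (q + 4) (q + 4 + 2 * c) i := by
      rw [hbound] at hlt
      rw [hsum]
      obtain ⟨a, ha⟩ := hleven
      obtain ⟨b, hb⟩ := hseven
      omega
    have hanti : Antitone (dseq (q + 4) (q + 4 + 2 * c)) := by
      intro i j hij
      have hval : i.val ≤ j.val := hij
      simp only [dseq]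
      split_ifs <;> omega
    have hgraphic : IsGraphic (dseq (q + 4) (q + 4 + 2 * c)) :=
      ⟨G0 (q + 4) (q + 4 + 2 * c), G0_deg (q + 4) (q + 4 + 2 * c) (by omega) hn2 (by exact ⟨c, by omega⟩)⟩
    obtain ⟨G, hG, g, hg⟩ := hprop (dseq (q + 4) (q + 4 + 2 * c)) hanti hgraphic hlsum
    -- now derive a contradiction
    set V := U.map f with hVdef
    have hVC4 : ¬ Contains V C4graph := fun h => hC4 (contains_of_map f U C4graph c4_no_iso h)
    have hVZ4 : ¬ Contains V Z4graph := fun h => hZ4 (contains_of_map f U Z4graph z4_no_iso h)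
    set A := (univ : Finset (Fin ((q + 4)+1))).filter (fun u => (q + 4) - 3 ≤ (g u).val) with hAdef
    have hAcard : 4 ≤ A.card := by
      have hneg : ((univ : Finset (Fin ((q + 4)+1))).filter
          (fun u => ¬ ((q + 4) - 3 ≤ (g u).val))).card ≤ (q + 4) - 3 := by
        have := Finset.card_le_card_of_injOn (fun u => g u)
          (s := (univ : Finset (Fin ((q + 4)+1))).filter (fun u => ¬ ((q + 4) - 3 ≤ (g u).val)))
          (t := (univ : Finset (Fin (q + 4 + 2 * c))).filter
            (fun w : Fin (q + 4 + 2 * c) => w.val < (q + 4) - 3))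
          (fun u hu => by
            rw [Finset.mem_coe, Finset.mem_filter] at hu ⊢
            refine ⟨Finset.mem_univ _, ?_⟩
            show (g u).val < (q + 4) - 3
            omega)
          (fun u _ v _ huv => g.injective huv)
        rwa [card_val_lt (q + 4 + 2 * c) ((q + 4)-3) (by omega)] at this
      have hsub : (univ : Finset (Fin ((q + 4)+1))) ⊆ A ∪ ((univ : Finset (Fin ((q + 4)+1))).filter
          (fun u => ¬ ((q + 4) - 3 ≤ (g u).val))) := by
        intro u _
        by_cases hcase : (q + 4) - 3 ≤ (g u).val
        · exact Finset.mem_union_left _ (Finset.mem_filter.mpr ⟨Finset.mem_univ _, hcase⟩)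
        · exact Finset.mem_union_right _ (Finset.mem_filter.mpr ⟨Finset.mem_univ _, hcase⟩)
      have htot := (Finset.card_le_card hsub).trans (Finset.card_union_le _ _)
      rw [Finset.card_univ, Fintype.card_fin] at htot
      omega
    obtain ⟨s, hsprop⟩ : ∃ s : Fin ((q + 4)+1), ∀ u : Fin ((q + 4)+1), (g u).val = (q + 4) - 3 → u = s := by
      by_cases hs : ∃ u : Fin ((q + 4)+1), (g u).val = (q + 4) - 3
      · obtain ⟨u0, hu0⟩ := hs
        exact ⟨u0, fun u hu => g.injective (Fin.ext (by rw [hu, hu0]))⟩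
      · exact ⟨0, fun u hu => absurd ⟨u, hu⟩ hs⟩
    have hkey : ∀ a ∈ A, ((A.erase a).filter (fun b => ¬ V.Adj a b)).card
        ≤ if a = s then 2 else 1 := by
      intro a ha
      have hga : (q + 4) - 3 ≤ (g a).val := (Finset.mem_filter.mp ha).2
      have htc := tail_count (by omega) hn2 G hG (g a) hga
      have hinj : ((A.erase a).filter (fun b => ¬ V.Adj a b)).card
          ≤ ((univ : Finset (Fin (q + 4 + 2 * c))).filter
              (fun w => G.Adj (g a) w ∧ (q + 4) - 3 ≤ w.val)).card := by
        apply Finset.card_le_card_of_injOn (fun b => g b)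
        · intro b hb
          rw [Finset.mem_coe, Finset.mem_filter, Finset.mem_erase] at hb
          obtain ⟨⟨hba, hbA⟩, hnadj⟩ := hb
          have hbA' : (q + 4) - 3 ≤ (g b).val := (Finset.mem_filter.mp hbA).2
          have hHadj : ((⊤ : SimpleGraph (Fin ((q + 4) + 1))) \ U.map f).Adj a b := by
            rw [SimpleGraph.sdiff_adj, SimpleGraph.top_adj]
            exact ⟨Ne.symm hba, hnadj⟩
          exact Finset.mem_filter.mpr ⟨Finset.mem_univ _, hg hHadj, hbA'⟩
        · exact fun u _ v _ huv => g.injective huv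
      have hd : dseq (q + 4) (q + 4 + 2 * c) (g a) = if (g a).val = (q + 4) - 3 then (q + 4) - 1 else (q + 4) - 2 := by
        simp only [dseq]
        rw [if_neg (by omega)]
      by_cases hval : (g a).val = (q + 4) - 3
      · have has : a = s := hsprop a hval
        rw [if_pos has]
        rw [if_pos hval] at hd
        omega
      · rw [if_neg hval] at hd
        have h1 : ((univ : Finset (Fin (q + 4 + 2 * c))).filter
            (fun w => G.Adj (g a) w ∧ (q + 4) - 3 ≤ w.val)).card ≤ 1 := by omega
        split_ifs <;> omega
    exact (key_lemma V hVC4 hVZ4 A hAcard s hkey).elim
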